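/- Let (g,a) be a normalized Γ-cocycle with respect to a cover {U_i}_{i∈I} of a set X. Then the following data form a groupoid 𝒫_{(g,a)}: objects are triples (i,x,g) with i ∈ I, x ∈ U_i and g ∈ G; morphisms from (j,x,g) to (i,x', g') exist only if x = x' ∈ U_i ∩ U_j and are quintuples (i,j,x,h,g) with h ∈ H such that g' = g_{ij}(x)⁻¹·t(h)·g; the identity at (i,x,g) is (i,i,x,1,g); and the composition is (i,j,x,h₂,g₂)∘(j,k,x,h₁,g₁) := (i,k,x, a_{ijk}(x)·α(g_{jk}(x),h₂)·h₁, g₁), defined whenever g₂ = g_{jk}(x)⁻¹·t(h₁)·g₁. In particular, the composition is associative and unital, and every morphism has a two-sided inverse. (This is the reconstruction of the total space groupoid from a cocycle in Section 3.2 of the paper.) -/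

import Mathlib

/-- A crossed module of groups. -/
structure CrossedModule (G H : Type*) [Group G] [Group H] where
  t : H → G
  α : G → H → H
  t_mul : ∀ h₁ h₂ : H, t (h₁ * h₂) = t h₁ * t h₂
  α_one : ∀ h : H, α 1 h = h
  α_mul : ∀ (g₁ g₂ : G) (h : H), α (g₁ * g₂) h = α g₁ (α g₂ h)
  α_hom : ∀ (g : G) (h₁ h₂ : H), α g (h₁ * h₂) = α g h₁ * α g h₂
  peiffer : ∀ h x : H, α (t h) x = h * x * h⁻¹
  equivariance : ∀ (g : G) (h : H), t (α g h) = g * t h * g⁻¹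

/-- A `Γ`-cocycle with respect to a family of subsets `U : I → Set X`, for the
Lie 2-group `Γ` associated to a crossed module `(G,H,t,α)`. -/
structure GammaCocycle {G H : Type*} [Group G] [Group H] (cm : CrossedModule G H)
    {X I : Type*} (U : I → Set X) where
  g : I → I → X → G
  a : I → I → I → X → H
  cocycle_g : ∀ (i j k : I) (x : X), x ∈ U i → x ∈ U j → x ∈ U k →
    g i k x = cm.t (a i j k x) * g j k x * g i j x
  cocycle_a : ∀ (i j k l : I) (x : X), x ∈ U i → x ∈ U j → x ∈ U k → x ∈ U l →
    a i k l x * cm.α (g k l x) (a i j k x) = a i j l x * a j k l x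


section Aux
variable {G H : Type*} [Group G] [Group H] (cm : CrossedModule G H)

lemma CrossedModule.t_one : cm.t 1 = 1 := by
  have := cm.t_mul 1 1; rw [mul_one] at this
  exact left_eq_mul.mp this

lemma CrossedModule.t_inv (h : H) : cm.t h⁻¹ = (cm.t h)⁻¹ := by
  have := cm.t_mul h h⁻¹; rw [mul_inv_cancel, cm.t_one] at this
  exact eq_inv_of_mul_eq_one_right this.symm

lemma CrossedModule.α_one' (g : G) : cm.α g 1 = 1 := by
  have := cm.α_hom g 1 1; rw [mul_one] at this
  exact left_eq_mul.mp this

end Aux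

/-- The data reconstructed from a normalized `Γ`-cocycle form a groupoid
`𝒫_{(g,a)}`: objects are triples `(i,x,g)` with `x ∈ U i` and `g ∈ G`; a morphism
from `(j,x,g)` to `(i,x,g')` is a quintuple `(i,j,x,h,g)` with
`g' = g_{ij}(x)⁻¹·t(h)·g`; the identity at `(i,x,g)` is `(i,i,x,1,g)`; and the
composition `(i,j,x,h₂,g₂)∘(j,k,x,h₁,g₁) := (i,k,x, a_{ijk}(x)·α(g_{jk}(x),h₂)·h₁, g₁)`
is defined whenever `g₂ = g_{jk}(x)⁻¹·t(h₁)·g₁`.  The composition is well-defined on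
hom-sets, associative and unital, and every morphism has a two-sided inverse. -/

theorem reconstructed_groupoid
    {G H : Type*} [Group G] [Group H] (cm : CrossedModule G H)
    {X I : Type*} (U : I → Set X) (hU : ∀ x : X, ∃ i : I, x ∈ U i)
    (c : GammaCocycle cm U)
    (hnorm_g : ∀ (i : I) (x : X), x ∈ U i → c.g i i x = 1)
    (hnorm_a₁ : ∀ (i j : I) (x : X), x ∈ U i → x ∈ U j → c.a i i j x = 1)
    (hnorm_a₂ : ∀ (i j : I) (x : X), x ∈ U i → x ∈ U j → c.a i j j x = 1)
    (hnorm_a₃ : ∀ (i j : I) (x : X), x ∈ U i → x ∈ U j → c.a i j i x = 1) :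
    -- `(i,i,x,1,g)` is a morphism from `(i,x,g)` to `(i,x,g)`
    (∀ (i : I) (x : X) (g : G), x ∈ U i →
      g = (c.g i i x)⁻¹ * cm.t (1 : H) * g) ∧
    -- the composite of a morphism `(k,x,g₁) → (j,x,g₂)` and a morphism starting at
    -- `(j,x,g₂)` is a morphism from `(k,x,g₁)` to the target of the second one
    (∀ (i j k : I) (x : X) (h₁ h₂ : H) (g₁ g₂ : G),
      x ∈ U i → x ∈ U j → x ∈ U k →
      g₂ = (c.g j k x)⁻¹ * cm.t h₁ * g₁ →
      (c.g i k x)⁻¹ * cm.t (c.a i j k x * cm.α (c.g j k x) h₂ * h₁) * g₁ =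
        (c.g i j x)⁻¹ * cm.t h₂ * g₂) ∧
    -- the composition is associative
    (∀ (i j k l : I) (x : X) (h₁ h₂ h₃ : H) (g₁ g₂ g₃ : G),
      x ∈ U i → x ∈ U j → x ∈ U k → x ∈ U l →
      g₂ = (c.g k l x)⁻¹ * cm.t h₁ * g₁ →
      g₃ = (c.g j k x)⁻¹ * cm.t h₂ * g₂ →
      c.a i j l x * cm.α (c.g j l x) h₃ * (c.a j k l x * cm.α (c.g k l x) h₂ * h₁) =
        c.a i k l x * cm.α (c.g k l x) (c.a i j k x * cm.α (c.g j k x) h₃ * h₂) * h₁) ∧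
    -- right unit: `(i,j,x,h,g) ∘ (j,j,x,1,g) = (i,j,x,h,g)`
    (∀ (i j : I) (x : X) (h : H) (g : G), x ∈ U i → x ∈ U j →
      g = (c.g j j x)⁻¹ * cm.t (1 : H) * g ∧
      c.a i j j x * cm.α (c.g j j x) h * (1 : H) = h) ∧
    -- left unit: `(i,i,x,1,g') ∘ (i,j,x,h,g) = (i,j,x,h,g)` for `g' = g_{ij}(x)⁻¹·t(h)·g`
    (∀ (i j : I) (x : X) (h : H) (g : G), x ∈ U i → x ∈ U j →
      (c.g i j x)⁻¹ * cm.t h * g =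
        (c.g i i x)⁻¹ * cm.t (1 : H) * ((c.g i j x)⁻¹ * cm.t h * g) ∧
      c.a i i j x * cm.α (c.g i j x) (1 : H) * h = h) ∧
    -- every morphism `(i,j,x,h,g)` has a two-sided inverse `(j,i,x,h',g')` with
    -- `g' := g_{ij}(x)⁻¹·t(h)·g`
    (∀ (i j : I) (x : X) (h : H) (g : G), x ∈ U i → x ∈ U j →
      ∃ h' : H,
        g = (c.g j i x)⁻¹ * cm.t h' * ((c.g i j x)⁻¹ * cm.t h * g) ∧
        c.a j i j x * cm.α (c.g i j x) h' * h = 1 ∧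
        c.a i j i x * cm.α (c.g j i x) h * h' = 1) := by

  refine ⟨?_, ?_, ?_, ?_, ?_, ?_⟩
  · intro i x g hi
    rw [hnorm_g i x hi, cm.t_one]; group
  · intro i j k x h₁ h₂ g₁ g₂ hi hj hk hg₂
    subst hg₂
    rw [cm.t_mul, cm.t_mul, cm.equivariance, c.cocycle_g i j k x hi hj hk]
    group
  · intro i j k l x h₁ h₂ h₃ g₁ g₂ g₃ hi hj hk hl hg₂ hg₃
    have hc := c.cocycle_a i j k l x hi hj hk hl
    have hg : cm.α (c.g j l x) h₃
        = c.a j k l x * cm.α (c.g k l x * c.g j k x) h₃ * (c.a j k l x)⁻¹ := by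
      rw [c.cocycle_g j k l x hj hk hl, mul_assoc, cm.α_mul, cm.peiffer, cm.α_mul]
    rw [cm.α_hom, cm.α_hom, ← cm.α_mul, hg]
    rw [← mul_assoc (c.a i k l x), ← mul_assoc (c.a i k l x), hc]
    group
  · intro i j x h g hi hj
    refine ⟨?_, ?_⟩
    · rw [hnorm_g j x hj, cm.t_one]; group
    · rw [hnorm_a₂ i j x hi hj, hnorm_g j x hj, cm.α_one]; group
  · intro i j x h g hi hj
    refine ⟨?_, ?_⟩
    · rw [hnorm_g i x hi, cm.t_one]; group
    · rw [hnorm_a₁ i j x hi hj, cm.α_one']; group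
  · intro i j x h g hi hj
    have hji : c.g j i x = (c.g i j x)⁻¹ := by
      have := c.cocycle_g i j i x hi hj hi
      rw [hnorm_g i x hi, hnorm_a₃ i j x hi hj, cm.t_one, one_mul] at this
      exact eq_inv_of_mul_eq_one_left this.symm
    refine ⟨cm.α (c.g i j x)⁻¹ h⁻¹, ?_, ?_, ?_⟩
    · rw [hji, cm.equivariance, cm.t_inv]; group
    · rw [hnorm_a₃ j i x hj hi, ← cm.α_mul, mul_inv_cancel, cm.α_one]; group
    · rw [hnorm_a₃ i j x hi hj, hji, one_mul, ← cm.α_hom, mul_inv_cancel, cm.α_one']
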